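/- Let g(x) be a nonzero polynomial in F_{p^m}[x,θ]/⟨x^{p^s} − λ_0⟩. Then g(x) is left invertible if and only if gcd_r(g(x), (λ_{0,0}x − 1)^{p^s}) = 1. -/

import Mathlib

open Polynomial

namespace SkewPaper

variable (p m t : ℕ) [Fact p.Prime]

/-- The finite field `F_{p^m}`. -/
abbrev Fq : Type := GaloisField p m

/-- The finite chain ring `R^t = F_{p^m}[u]/⟨u^t⟩`. -/
abbrev Rt : Type :=
  Polynomial (Fq p m) ⧸ Ideal.span {(Polynomial.X : Polynomial (Fq p m)) ^ t}

/-- The element `u` of `R^t`. -/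
noncomputable def uE : Rt p m t := Ideal.Quotient.mk _ Polynomial.X

/-- The canonical embedding `F_{p^m} → R^t`. -/
noncomputable def eps : Fq p m →+* Rt p m t :=
  (Ideal.Quotient.mk _).comp Polynomial.C

/-- The automorphism `Θ` of `R^t` extending `θ` with `Θ(u) = u`,
i.e. `Θ(a₀ + a₁u + ⋯ + a_{t-1}u^{t-1}) = θ(a₀) + θ(a₁)u + ⋯ + θ(a_{t-1})u^{t-1}`. -/
noncomputable def Th (theta : Fq p m ≃+* Fq p m) : Rt p m t ≃+* Rt p m t :=
  Ideal.quotientEquiv _ _ (Polynomial.mapEquiv theta) (by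
    rw [Ideal.map_span, Set.image_singleton]
    simp [Polynomial.mapEquiv_apply])

/-- Reduction of `R^t` modulo `u`. -/
noncomputable def rdc (ht : 0 < t) : Rt p m t →+* Fq p m :=
  Ideal.Quotient.lift _ (Polynomial.evalRingHom 0) (by
    intro a ha
    rw [Ideal.mem_span_singleton] at ha
    obtain ⟨b, rfl⟩ := ha
    simp [zero_pow ht.ne'])

/-- `a` right-divides `b`, i.e. `b = h * a` for some `h`. -/
def RDvd {A : Type*} [Mul A] (a b : A) : Prop := ∃ h, b = h * a

/-- The element `Σᵢ ι(cᵢ) X^i` determined by a coefficient family `c`. -/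
noncomputable def spoly {R A : Type*} [Semiring R] [Semiring A] (iot : R →+* A) (X : A)
    (c : ℕ →₀ R) : A :=
  c.sum fun i a => iot a * X ^ i

/-- Lift `Σᵢ ι(ε(cᵢ)) X^i` of a skew polynomial over `F_{p^m}` to the skew polynomial ring
over `R^t` (coefficient-wise, via the embedding `F_{p^m} → R^t`). -/
noncomputable def liftP {A : Type*} [Semiring A] (iot : Rt p m t →+* A) (X : A)
    (c : ℕ →₀ Fq p m) : A :=
  c.sum fun i a => iot (eps p m t a) * X ^ i

/-- `λ = λ₀ + uλ₁ + ⋯ + u^{t-1}λ_{t-1}` as an element of `R^t`. -/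
noncomputable def lamOf (lc : ℕ → Fq p m) : Rt p m t :=
  ∑ i ∈ Finset.range t, eps p m t (lc i) * uE p m t ^ i

/-- The order `|Θ|` of `Θ` in the automorphism group of `R^t`. -/
noncomputable def thOrder (theta : Fq p m ≃+* Fq p m) : ℕ :=
  orderOf (G := RingAut (Rt p m t)) (Th p m t theta)

/-- The order `|θ|` of `θ` in the automorphism group of `F_{p^m}`. -/
noncomputable def thetaOrder (theta : Fq p m ≃+* Fq p m) : ℕ :=
  orderOf (G := RingAut (Fq p m)) theta

/-- The central polynomial `f(x) = Σᵢ fᵢ x^{i·|Θ|}` in the skew polynomial ring. -/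
noncomputable def fOf {A : Type*} [Ring A] (theta : Fq p m ≃+* Fq p m)
    (iot : Rt p m t →+* A) (X : A) (fc : ℕ →₀ Rt p m t) : A :=
  fc.sum fun i a => iot a * X ^ (i * thOrder p m t theta)

/-- The image of `u` in the quotient `R^{t,f}_Θ`. -/
noncomputable def uQ {P Q : Type*} [Semiring P] [Semiring Q] (iot : Rt p m t →+* P)
    (piQ : P →+* Q) : Q :=
  piQ (iot (uE p m t))

/-- The image in `R^{t,f}_Θ` of the lift of a skew polynomial over `F_{p^m}`. -/
noncomputable def lQ {P Q : Type*} [Semiring P] [Semiring Q] (iot : Rt p m t →+* P) (X : P)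
    (piQ : P →+* Q) (c : ℕ →₀ Fq p m) : Q :=
  piQ (liftP p m t iot X c)

/-- The class in `F_{p^m}[x,θ]/⟨f̄⟩` of the skew polynomial with coefficients `c`. -/
noncomputable def lQf {Pf Qf : Type*} [Semiring Pf] [Semiring Qf] (iotf : Fq p m →+* Pf)
    (Xf : Pf) (pif : Pf →+* Qf) (c : ℕ →₀ Fq p m) : Qf :=
  pif (spoly iotf Xf c)

/-- `b(x)` right-divides `c(x)` in the quotient `F_{p^m}[x,θ]/⟨f̄⟩`. -/
def RDvdC {Pf Qf : Type*} [Semiring Pf] [Semiring Qf] (iotf : Fq p m →+* Pf) (Xf : Pf)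
    (pif : Pf →+* Qf) (b c : ℕ →₀ Fq p m) : Prop :=
  ∃ h : Qf, lQf p m iotf Xf pif c = h * lQf p m iotf Xf pif b

/-- Membership in `B_w`: representative of degree `≤ D - 1` which right-divides `w`. -/
def InB {Pf : Type*} [Semiring Pf] (iotf : Fq p m →+* Pf) (Xf : Pf) (w : Pf) (D : ℕ)
    (c : ℕ →₀ Fq p m) : Prop :=
  (∀ i, D ≤ i → c i = 0) ∧ RDvd (spoly iotf Xf c) w

/-- `deg c < deg d` for coefficient families. -/
def degLt {R : Type*} [Zero R] (c d : ℕ →₀ R) : Prop := c.support.max < d.support.max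

/-- "Type (ii)" left ideals of `R^{t,f}_Θ`: those of the form
`Σⱼ R (u^{(t-1)-i_j} b_{i_j}(x) - u^{(t-1)-(i_j-1)} g_{i_j}(x))` with
`0 ≤ i₁ < ⋯ < i_n ≤ t-2`, `b_{i_j} ∈ B_w` of degree `≤ D - 1`, together with the
right-divisibility side condition. -/
def TypeTwo (p m t : ℕ) [Fact p.Prime] {P Pf Q Qf : Type*} [Ring P] [Ring Pf] [Ring Q] [Ring Qf]
    (iot : Rt p m t →+* P) (Xp : P) (piQ : P →+* Q)
    (iotf : Fq p m →+* Pf) (Xf : Pf) (pif : Pf →+* Qf)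
    (w : Pf) (D : ℕ) (J : Ideal Q) : Prop :=
  ∃ (n : ℕ) (idx : Fin n → ℕ) (bcs : Fin n → (ℕ →₀ Fq p m)) (gs : Fin n → Q),
    StrictMono idx ∧ (∀ j, idx j ≤ t - 2) ∧ (∀ j, InB p m iotf Xf w D (bcs j)) ∧
    J = Submodule.span Q (Set.range fun j : Fin n =>
        uQ p m t iot piQ ^ (t - 1 - idx j) * lQ p m t iot Xp piQ (bcs j)
          - uQ p m t iot piQ ^ (t - idx j) * gs j) ∧
    ∀ (j k : Fin n), j < k → ∀ (cc : ℕ →₀ Fq p m) (g : Q),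
      uQ p m t iot piQ ^ (t - 1 - idx j) * lQ p m t iot Xp piQ cc
          + uQ p m t iot piQ ^ (t - idx j) * g ∈
        Submodule.span Q ((fun l : Fin n =>
          uQ p m t iot piQ ^ (t - 1 - idx l) * lQ p m t iot Xp piQ (bcs l)
            - uQ p m t iot piQ ^ (t - idx l) * gs l) '' {l | k ≤ l}) →
      RDvdC p m iotf Xf pif (bcs j) cc

section Aux

variable {K : Type*} [Field K] {A : Type*} [Ring A]
variable (iot : K →+* A) (X : A) (theta : K ≃+* K)
variable (hXiot : ∀ a, X * iot a = iot (theta a) * X)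

/-- spoly as an additive hom. -/
noncomputable def spolyHom : (ℕ →₀ K) →+ A :=
  Finsupp.liftAddHom fun i => (AddMonoidHom.mulRight (X ^ i)).comp iot.toAddMonoidHom

lemma spolyHom_eq (c : ℕ →₀ K) : spolyHom iot X c = spoly iot X c := by
  simp [spolyHom, spoly, Finsupp.liftAddHom_apply, Finsupp.sum]

lemma spoly_sub (c d : ℕ →₀ K) :
    spoly iot X (c - d) = spoly iot X c - spoly iot X d := by
  rw [← spolyHom_eq, ← spolyHom_eq, ← spolyHom_eq, map_sub]

lemma spoly_zero : spoly iot X (0 : ℕ →₀ K) = 0 := by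
  rw [← spolyHom_eq, map_zero]

include hXiot in
lemma pow_mul_iot (k : ℕ) (a : K) :
    X ^ k * iot a = iot ((⇑theta)^[k] a) * X ^ k := by
  induction k generalizing a with
  | zero => simp
  | succ n ih =>
    rw [pow_succ, mul_assoc, hXiot, ← mul_assoc, ih (theta a),
      ← Function.iterate_succ_apply, mul_assoc, ← pow_succ]

/-- the shifted coefficient family for `iot a * X^k * spoly c` -/
noncomputable def shiftC (a : K) (k : ℕ) (c : ℕ →₀ K) : ℕ →₀ K :=
  Finsupp.embDomain ⟨(k + ·), fun x y h => by simpa using h⟩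
    (c.mapRange (fun b => a * (⇑theta)^[k] b) (by simp))

include hXiot in
lemma spoly_shiftC (a : K) (k : ℕ) (c : ℕ →₀ K) :
    spoly iot X (shiftC theta a k c) = iot a * X ^ k * spoly iot X c := by
  rw [spoly, shiftC, Finsupp.sum_embDomain, Finsupp.sum_mapRange_index (by simp)]
  rw [spoly, Finsupp.mul_sum]
  refine Finsupp.sum_congr fun i hi => ?_
  rw [mul_assoc, ← mul_assoc (X ^ k), pow_mul_iot iot X theta hXiot, map_mul,
    mul_assoc, mul_assoc, ← pow_add]
  rfl

variable (rep : A → (ℕ →₀ K)) (hrep : ∀ f, f = spoly iot X (rep f))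
variable (huniq : ∀ f c, f = spoly iot X c → c = rep f)

include hrep huniq in
lemma rep_zero : rep (0 : A) = 0 := (huniq 0 0 (spoly_zero iot X).symm).symm

include hrep huniq in
lemma eq_zero_of_rep_eq_zero {f : A} (h : rep f = 0) : f = 0 := by
  rw [hrep f, h, spoly_zero]

include hXiot hrep huniq in
/-- Cancellation step of the right Euclidean algorithm. -/
lemma cancel_step (f e : A) (n d : ℕ)
    (hn : n ∈ (rep f).support) (hnmax : ∀ j ∈ (rep f).support, j ≤ n)
    (hd : d ∈ (rep e).support) (hdmax : ∀ j ∈ (rep e).support, j ≤ d)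
    (hdn : d ≤ n) :
    ∃ q, ∀ j ∈ (rep (f - q * e)).support, j < n := by
  set cf := rep f with hcf
  set ce := rep e with hce
  have hced : ce d ≠ 0 := Finsupp.mem_support_iff.mp hd
  set k := n - d with hk
  have hkd : k + d = n := by omega
  set t := (⇑theta)^[k] (ce d) with ht
  have htne : t ≠ 0 := by
    intro h0
    apply hced
    have hinj : Function.Injective ((⇑theta)^[k]) :=
      Function.Injective.iterate theta.injective k
    have : (⇑theta)^[k] (ce d) = (⇑theta)^[k] 0 := by
      rw [← ht, h0]; simp [Function.iterate_fixed (map_zero theta)]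
    exact hinj this
  set a := cf n * t⁻¹ with ha
  refine ⟨iot a * X ^ k, ?_⟩
  have hqe : (iot a * X ^ k) * e = spoly iot X (shiftC theta a k ce) := by
    rw [hrep e, ← hce, spoly_shiftC iot X theta hXiot]
  have hsub : f - (iot a * X ^ k) * e = spoly iot X (cf - shiftC theta a k ce) := by
    rw [spoly_sub, hqe, hcf, ← hrep f]
  have hrepsub : rep (f - (iot a * X ^ k) * e) = cf - shiftC theta a k ce :=
    (huniq _ _ hsub).symm
  rw [hrepsub]
  intro j hj
  have hjne : (cf - shiftC theta a k ce) j ≠ 0 := Finsupp.mem_support_iff.mp hj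
  rw [Finsupp.sub_apply] at hjne
  -- value of shiftC at n
  have h1 : shiftC theta a k ce (k + d) = a * t := by
    have h2 := Finsupp.embDomain_apply_self
      (⟨(k + ·), fun x y h => by simpa using h⟩ : ℕ ↪ ℕ)
      (ce.mapRange (fun b => a * (⇑theta)^[k] b) (by simp)) d
    exact h2.trans Finsupp.mapRange_apply
  rw [hkd] at h1
  have hshift_at : shiftC theta a k ce n = cf n := by
    rw [h1, ha, mul_assoc, inv_mul_cancel₀ htne, mul_one]
  have hjle : j ≤ n := by
    by_cases hcfj : cf j ≠ 0
    · exact hnmax j (Finsupp.mem_support_iff.mpr hcfj)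
    · push_neg at hcfj
      have hsj : shiftC theta a k ce j ≠ 0 := by
        intro h0; apply hjne; rw [hcfj, h0, sub_zero]
      have hjs : j ∈ (shiftC theta a k ce).support := Finsupp.mem_support_iff.mpr hsj
      rw [shiftC, Finsupp.support_embDomain, Finset.mem_map] at hjs
      obtain ⟨i, hi, hij⟩ := hjs
      have hice : i ∈ ce.support := Finsupp.support_mapRange hi
      have : i ≤ d := hdmax i hice
      change k + i = j at hij
      omega
  have hjn : j ≠ n := by
    intro h
    apply hjne
    rw [h, hshift_at, sub_self]
  omega

include hXiot hrep huniq in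
/-- Right Euclidean division (remainder form), by strong induction on a degree bound. -/
lemma div_step (e : A) (d : ℕ)
    (hd : d ∈ (rep e).support) (hdmax : ∀ j ∈ (rep e).support, j ≤ d) :
    ∀ N : ℕ, ∀ f : A, (∀ j ∈ (rep f).support, j < N) →
      ∃ q, ∀ j ∈ (rep (f - q * e)).support, j < d := by
  intro N
  induction N with
  | zero =>
    intro f hf
    refine ⟨0, ?_⟩
    have : rep f = 0 := by
      ext j
      by_contra hj
      exact absurd (hf j (Finsupp.mem_support_iff.mpr hj)) (by omega)
    have hf0 : f = 0 := eq_zero_of_rep_eq_zero iot X rep hrep huniq this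
    rw [hf0, zero_mul, sub_zero, rep_zero iot X rep hrep huniq]
    simp
  | succ N ih =>
    intro f hf
    by_cases hlt : ∀ j ∈ (rep f).support, j < d
    · exact ⟨0, by rwa [zero_mul, sub_zero]⟩
    · push_neg at hlt
      obtain ⟨j₀, hj₀, hdj₀⟩ := hlt
      have hne : (rep f).support.Nonempty := ⟨j₀, hj₀⟩
      set n := (rep f).support.max' hne with hn
      have hnmem : n ∈ (rep f).support := Finset.max'_mem _ hne
      have hnmax : ∀ j ∈ (rep f).support, j ≤ n := fun j hj => Finset.le_max' _ j hj
      have hdn : d ≤ n := le_trans hdj₀ (hnmax j₀ hj₀)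
      obtain ⟨q₁, hq₁⟩ := cancel_step iot X theta hXiot rep hrep huniq f e n d
        hnmem hnmax hd hdmax hdn
      have hnN : n < N + 1 := hf n hnmem
      obtain ⟨q₂, hq₂⟩ := ih (f - q₁ * e) (fun j hj => by
        have := hq₁ j hj; omega)
      refine ⟨q₁ + q₂, ?_⟩
      have : f - (q₁ + q₂) * e = f - q₁ * e - q₂ * e := by noncomm_ring
      rw [this]
      exact hq₂

end Aux

lemma lam_pow_key (p m s : ℕ) [Fact p.Prime] (hm : 0 < m) (lam0 : Fq p m) :
    ((lam0 ^ p ^ (m - s % m))⁻¹) ^ p ^ s = lam0⁻¹ := by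
  haveI : Fintype (Fq p m) := Fintype.ofFinite _
  have hcard : Fintype.card (Fq p m) = p ^ m := by
    rw [← Nat.card_eq_fintype_card, GaloisField.card p m hm.ne']
  have hpm : ∀ a : Fq p m, a ^ p ^ m = a := by
    intro a
    rw [← hcard]
    exact FiniteField.pow_card a
  have key : ∀ k : ℕ, lam0 ^ p ^ (m * k) = lam0 := by
    intro k
    induction k with
    | zero => simp
    | succ n ih =>
      rw [Nat.mul_succ, pow_add, pow_mul, ih, hpm]
  rw [inv_pow, ← pow_mul, ← pow_add]
  have hqr := Nat.div_add_mod s m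
  have hrm : s % m < m := Nat.mod_lt _ hm
  have : m - s % m + s = m * (s / m + 1) := by rw [Nat.mul_add, mul_one]; omega
  rw [this, key]

/-- A nonzero `g(x)` in `F_{p^m}[x,θ]/⟨x^{p^s}-λ₀⟩` is left invertible
iff `gcd_r(g(x), (λ₀₀x-1)^{p^s}) = 1`, i.e. iff every common right divisor of (a
representative of) `g(x)` and `(λ₀₀x-1)^{p^s}` right-divides `1`. -/
theorem statement5 (p m s : ℕ) [Fact p.Prime] (hm : 0 < m) (hs : 0 < s)
    (theta : Fq p m ≃+* Fq p m)
    (lam0 : Fq p m) (hl0 : lam0 ≠ 0) (hthl : theta lam0 = lam0)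
    (hord : thetaOrder p m theta ∣ p ^ s)
    {Pf : Type*} [Ring Pf] (iotf : Fq p m →+* Pf) (Xf : Pf)
    (hXiotf : ∀ a, Xf * iotf a = iotf (theta a) * Xf)
    (hPfrep : ∀ g : Pf, ∃! c : ℕ →₀ Fq p m, g = spoly iotf Xf c)
    {Qf : Type*} [Ring Qf] (pif : Pf →+* Qf) (hpif : Function.Surjective pif)
    (hkerf : RingHom.ker pif = Ideal.span {Xf ^ p ^ s - iotf lam0})
    (gP : Pf) (hg : pif gP ≠ 0) :
    (∃ h : Qf, h * pif gP = 1) ↔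
      ∀ e : Pf, RDvd e gP →
        RDvd e ((iotf ((lam0 ^ p ^ (m - s % m))⁻¹) * Xf - 1) ^ p ^ s) → RDvd e (1 : Pf) := by
  classical
  have hQfnt : Nontrivial Qf := ⟨pif gP, 0, hg⟩
  haveI : Nontrivial Pf := pif.domain_nontrivial
  haveI : CharP Pf p := charP_of_injective_ringHom iotf.injective p
  set l00 : Fq p m := (lam0 ^ p ^ (m - s % m))⁻¹ with hl00
  have hth00 : theta l00 = l00 := by
    rw [hl00, map_inv₀, map_pow, hthl]
  have hy : ∀ j : ℕ, (iotf l00 * Xf) ^ j = iotf (l00 ^ j) * Xf ^ j := by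
    intro j
    induction j with
    | zero => simp
    | succ n ih =>
      rw [pow_succ, ih, mul_assoc, ← mul_assoc (Xf ^ n),
        pow_mul_iot iotf Xf theta hXiotf n l00, Function.iterate_fixed hth00 n]
      simp [pow_succ, map_mul, mul_assoc]
  have hF : (iotf l00 * Xf - 1) ^ p ^ s = iotf lam0⁻¹ * Xf ^ p ^ s - 1 := by
    have hc : Commute (iotf l00 * Xf) (1 : Pf) := Commute.one_right _
    rw [sub_pow_char_pow_of_commute p s hc, one_pow, hy, hl00,
      lam_pow_key p m s hm lam0]
  have hker : Xf ^ p ^ s - iotf lam0 ∈ RingHom.ker pif := by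
    rw [hkerf]
    exact Ideal.subset_span rfl
  have hXeq : pif (Xf ^ p ^ s) = pif (iotf lam0) := by
    have h := RingHom.mem_ker.mp hker
    rw [map_sub, sub_eq_zero] at h
    exact h
  have hpifF : pif ((iotf l00 * Xf - 1) ^ p ^ s) = 0 := by
    rw [hF, map_sub, map_one, map_mul, hXeq, ← map_mul, ← map_mul,
      inv_mul_cancel₀ hl0, map_one, map_one, sub_self]
  have hgen : iotf lam0 * ((iotf l00 * Xf - 1) ^ p ^ s) = Xf ^ p ^ s - iotf lam0 := by
    rw [hF, mul_sub, mul_one, ← mul_assoc, ← map_mul, mul_inv_cancel₀ hl0,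
      map_one, one_mul]
  constructor
  · rintro ⟨h, hh⟩ e ⟨a, ha⟩ ⟨b, hb⟩
    obtain ⟨h', rfl⟩ := hpif h
    have h1 : h' * gP - 1 ∈ RingHom.ker pif := by
      rw [RingHom.mem_ker, map_sub, map_mul, map_one, hh, sub_self]
    rw [hkerf] at h1
    obtain ⟨c, hc⟩ := Submodule.mem_span_singleton.mp h1
    rw [smul_eq_mul] at hc
    have h2 : (1 : Pf) = h' * gP - c * (Xf ^ p ^ s - iotf lam0) := by
      rw [hc]; noncomm_ring
    rw [ha, ← hgen, hb] at h2
    refine ⟨h' * a - c * (iotf lam0 * b), ?_⟩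
    rw [h2]
    noncomm_ring
  · intro hgcd
    choose rep hrep huniq using hPfrep
    set F : Pf := (iotf l00 * Xf - 1) ^ p ^ s with hFdef
    set I : Ideal Pf := Ideal.span {gP, F} with hI
    have hgPI : gP ∈ I := Ideal.subset_span (by simp)
    have hFI : F ∈ I := Ideal.subset_span (by simp)
    have hgP0 : gP ≠ 0 := fun h0 => hg (by rw [h0, map_zero])
    have hsupne : ∀ f : Pf, f ≠ 0 → (rep f).support.Nonempty := by
      intro f hf
      rw [Finset.nonempty_iff_ne_empty]
      intro h0
      exact hf (eq_zero_of_rep_eq_zero iotf Xf rep hrep huniq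
        (Finsupp.support_eq_empty.mp h0))
    have hSne : ∃ n : ℕ, ∃ f : Pf, f ∈ I ∧ f ≠ 0 ∧ n ∈ (rep f).support ∧
        ∀ j ∈ (rep f).support, j ≤ n := by
      have hne := hsupne gP hgP0
      exact ⟨(rep gP).support.max' hne, gP, hgPI, hgP0, Finset.max'_mem _ _,
        fun j hj => Finset.le_max' _ j hj⟩
    set n := Nat.find hSne with hn
    obtain ⟨e, heI, he0, hnd, hnmax⟩ := Nat.find_spec hSne
    have hdiv : ∀ f ∈ I, ∃ q, f = q * e := by
      intro f hfI
      obtain ⟨q, hq⟩ := div_step iotf Xf theta hXiotf rep hrep huniq e n hnd hnmax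
        ((rep f).support.sup id + 1) f
        (fun j hj => Nat.lt_succ_of_le (Finset.le_sup (f := id) hj))
      refine ⟨q, ?_⟩
      by_contra hne
      have hfq0 : f - q * e ≠ 0 := by
        intro h0
        rw [sub_eq_zero] at h0
        exact hne h0
      have hsne := hsupne _ hfq0
      have hkI : f - q * e ∈ I := I.sub_mem hfI (I.mul_mem_left q heI)
      have hge : n ≤ (rep (f - q * e)).support.max' hsne :=
        Nat.find_min' hSne ⟨f - q * e, hkI, hfq0, Finset.max'_mem _ _,
          fun j hj => Finset.le_max' _ j hj⟩
      have hlt : (rep (f - q * e)).support.max' hsne < n :=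
        hq _ (Finset.max'_mem _ _)
      omega
    obtain ⟨qg, hqg⟩ := hdiv gP hgPI
    obtain ⟨qF, hqF⟩ := hdiv F hFI
    obtain ⟨c, hc⟩ := hgcd e ⟨qg, hqg⟩ ⟨qF, hqF⟩
    obtain ⟨u, v, huv⟩ := Submodule.mem_span_pair.mp heI
    have h1 : (1 : Pf) = c * u * gP + c * v * F := by
      rw [hc, ← huv, smul_eq_mul, smul_eq_mul]
      noncomm_ring
    refine ⟨pif (c * u), ?_⟩
    have h2 := congrArg pif h1
    rw [map_one, map_add] at h2
    simp only [map_mul] at h2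
    rw [hpifF, mul_zero, add_zero] at h2
    rw [map_mul]
    exact h2.symm


end SkewPaper
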